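/- Let M ≥ 1, let β̄ ∈ (0,1) and μ̄ > 1 be real numbers, set τ = -ln(μ̄)/ln(β̄), let N₀ ≥ 0, let σ : ℕ → Fin M be a selecting signal, and let V : Fin M → ℕ → ℝ be a family of nonnegative functions such that (i) for every k ≥ 1, V (σ k) k ≤ β̄ · V (σ k) (k-1), and (ii) for all i, j ∈ Fin M and all k, V i k ≤ μ̄ · V j k. If for all k₁ < k₂ the number of switches satisfies N(k₁,k₂) ≤ N₀ + (k₂ - k₁)/τ, then for all k₁ < k₂, V (σ k₂) k₂ ≤ μ̄^(N₀) · V (σ k₁) k₁. -/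

import Mathlib

open Finset

theorem sola_dwell_time_regret_bound
    (M : ℕ) (hM : 1 ≤ M) (β μ : ℝ) (hβ0 : 0 < β) (hβ1 : β < 1) (hμ : 1 < μ)
    (τ : ℝ) (hτ : τ = -Real.log μ / Real.log β)
    (N₀ : ℝ) (hN₀ : 0 ≤ N₀)
    (σ : ℕ → Fin M) (V : Fin M → ℕ → ℝ)
    (hVnonneg : ∀ i k, 0 ≤ V i k)
    (hcontract : ∀ k, 1 ≤ k → V (σ k) k ≤ β * V (σ k) (k - 1))
    (hcompare : ∀ i j k, V i k ≤ μ * V j k)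
    (hswitch : ∀ k₁ k₂ : ℕ, k₁ < k₂ →
      (((Finset.Ioc k₁ k₂).filter (fun k => σ k ≠ σ (k - 1))).card : ℝ) ≤
        N₀ + ((k₂ : ℝ) - (k₁ : ℝ)) / τ) :
    ∀ k₁ k₂ : ℕ, k₁ < k₂ → V (σ k₂) k₂ ≤ μ ^ N₀ * V (σ k₁) k₁ := by
  have hμ0 : (0:ℝ) < μ := lt_trans one_pos hμ
  have main : ∀ k₂ k₁ : ℕ, k₁ < k₂ →
      V (σ k₂) k₂ ≤ β ^ (k₂ - k₁) *
        μ ^ (((Finset.Ioc k₁ k₂).filter (fun k => σ k ≠ σ (k - 1))).card) *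
        V (σ k₁) k₁ := by
    intro k₂
    induction k₂ with
    | zero => intro k₁ h; omega
    | succ n ih =>
      intro k₁ h
      have h1 : V (σ (n+1)) (n+1) ≤ β * V (σ (n+1)) n := by
        have := hcontract (n+1) (by omega)
        simpa using this
      by_cases hk : k₁ = n
      · subst hk
        have hIoc : Finset.Ioc k₁ (k₁+1) = {k₁+1} := by
          ext x; simp only [Finset.mem_Ioc, Finset.mem_singleton]; omega
        have hsub : (k₁+1) - k₁ = 1 := by omega
        rw [hIoc, hsub]
        by_cases hs : σ (k₁+1) = σ k₁
        · have hf : ({k₁+1} : Finset ℕ).filter (fun k => σ k ≠ σ (k-1)) = ∅ := by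
            have : (k₁+1) - 1 = k₁ := by omega
            simp [Finset.filter_singleton, this, hs]
          rw [hf]
          simp only [Finset.card_empty, pow_zero, mul_one, pow_one]
          calc V (σ (k₁+1)) (k₁+1) ≤ β * V (σ (k₁+1)) k₁ := h1
            _ = β * V (σ k₁) k₁ := by rw [hs]
        · have hf : ({k₁+1} : Finset ℕ).filter (fun k => σ k ≠ σ (k-1)) = {k₁+1} := by
            have : (k₁+1) - 1 = k₁ := by omega
            simp [Finset.filter_singleton, this, hs]
          rw [hf]
          simp only [Finset.card_singleton, pow_one]
          have h2 : V (σ (k₁+1)) k₁ ≤ μ * V (σ k₁) k₁ := hcompare _ _ _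
          calc V (σ (k₁+1)) (k₁+1) ≤ β * V (σ (k₁+1)) k₁ := h1
            _ ≤ β * (μ * V (σ k₁) k₁) := by
                exact mul_le_mul_of_nonneg_left h2 (le_of_lt hβ0)
            _ = β * μ * V (σ k₁) k₁ := by ring
      · have hk' : k₁ < n := by omega
        have hmem : (n+1) ∉ Finset.Ioc k₁ n := by simp
        have hIoc : Finset.Ioc k₁ (n+1) = insert (n+1) (Finset.Ioc k₁ n) := by
          ext x; simp [Finset.mem_Ioc, Finset.mem_insert]; omega
        have hsub : (n+1) - k₁ = (n - k₁) + 1 := by omega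
        have ihn := ih k₁ hk'
        set N := ((Finset.Ioc k₁ n).filter (fun k => σ k ≠ σ (k-1))).card with hN
        have hpows : (0:ℝ) ≤ β ^ (n - k₁) * μ ^ N := by positivity
        rw [hIoc, hsub]
        by_cases hs : σ (n+1) = σ n
        · have hf : (insert (n+1) (Finset.Ioc k₁ n)).filter (fun k => σ k ≠ σ (k-1))
              = (Finset.Ioc k₁ n).filter (fun k => σ k ≠ σ (k-1)) := by
            rw [Finset.filter_insert]
            have : (n+1) - 1 = n := by omega
            simp [this, hs]
          rw [hf]
          calc V (σ (n+1)) (n+1) ≤ β * V (σ (n+1)) n := h1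
            _ = β * V (σ n) n := by rw [hs]
            _ ≤ β * (β ^ (n - k₁) * μ ^ N * V (σ k₁) k₁) :=
                mul_le_mul_of_nonneg_left ihn (le_of_lt hβ0)
            _ = β ^ (n - k₁ + 1) * μ ^ N * V (σ k₁) k₁ := by ring
        · have hf : (insert (n+1) (Finset.Ioc k₁ n)).filter (fun k => σ k ≠ σ (k-1))
              = insert (n+1) ((Finset.Ioc k₁ n).filter (fun k => σ k ≠ σ (k-1))) := by
            rw [Finset.filter_insert]
            have : (n+1) - 1 = n := by omega
            simp [this, hs]
          have hmem' : (n+1) ∉ (Finset.Ioc k₁ n).filter (fun k => σ k ≠ σ (k-1)) := by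
            simp [Finset.mem_filter]
          rw [hf, Finset.card_insert_of_notMem hmem']
          have h2 : V (σ (n+1)) n ≤ μ * V (σ n) n := hcompare _ _ _
          calc V (σ (n+1)) (n+1) ≤ β * V (σ (n+1)) n := h1
            _ ≤ β * (μ * V (σ n) n) := mul_le_mul_of_nonneg_left h2 (le_of_lt hβ0)
            _ ≤ β * (μ * (β ^ (n - k₁) * μ ^ N * V (σ k₁) k₁)) := by
                have := mul_le_mul_of_nonneg_left ihn (le_of_lt hμ0)
                exact mul_le_mul_of_nonneg_left this (le_of_lt hβ0)
            _ = β ^ (n - k₁ + 1) * μ ^ (N + 1) * V (σ k₁) k₁ := by ring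
  intro k₁ k₂ h
  have hbound := main k₂ k₁ h
  set N := ((Finset.Ioc k₁ k₂).filter (fun k => σ k ≠ σ (k-1))).card with hNdef
  set n := k₂ - k₁ with hndef
  have hn1 : 1 ≤ n := by omega
  have hcast : ((k₂ : ℝ) - (k₁ : ℝ)) = (n : ℝ) := by
    have hk : k₂ = k₁ + n := by omega
    rw [hk]; push_cast; ring
  have hNle : (N : ℝ) ≤ N₀ + (n : ℝ) / τ := by
    have := hswitch k₁ k₂ h
    rwa [hcast] at this
  have hlogβ : Real.log β < 0 := Real.log_neg hβ0 hβ1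
  have hlogμ : 0 < Real.log μ := Real.log_pos hμ
  have hexp : (n : ℝ) / τ * Real.log μ = -(n : ℝ) * Real.log β := by
    have hne : Real.log μ ≠ 0 := ne_of_gt hlogμ
    rw [hτ]; field_simp
  have hrw : μ ^ ((n : ℝ) / τ) = β ^ (-(n : ℝ)) := by
    rw [Real.rpow_def_of_pos hμ0, Real.rpow_def_of_pos hβ0]
    congr 1
    rw [mul_comm, hexp]; ring
  have hone : β ^ (n : ℕ) * μ ^ ((n : ℝ) / τ) = 1 := by
    rw [hrw, ← Real.rpow_natCast β n, ← Real.rpow_add hβ0]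
    simp
  have hμN : (μ : ℝ) ^ (N : ℕ) ≤ μ ^ (N₀ + (n : ℝ) / τ) := by
    rw [← Real.rpow_natCast μ N]
    exact Real.rpow_le_rpow_of_exponent_le (le_of_lt hμ) hNle
  have hkey : β ^ (n : ℕ) * μ ^ (N : ℕ) ≤ μ ^ N₀ := by
    have h1 : β ^ (n : ℕ) * μ ^ (N : ℕ) ≤ β ^ (n : ℕ) * μ ^ (N₀ + (n : ℝ) / τ) :=
      mul_le_mul_of_nonneg_left hμN (by positivity)
    have h2 : β ^ (n : ℕ) * μ ^ (N₀ + (n : ℝ) / τ) = μ ^ N₀ := by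
      rw [Real.rpow_add hμ0]
      calc β ^ (n : ℕ) * (μ ^ N₀ * μ ^ ((n : ℝ) / τ))
          = μ ^ N₀ * (β ^ (n : ℕ) * μ ^ ((n : ℝ) / τ)) := by ring
        _ = μ ^ N₀ := by rw [hone, mul_one]
    linarith
  calc V (σ k₂) k₂ ≤ β ^ n * μ ^ N * V (σ k₁) k₁ := hbound
    _ ≤ μ ^ N₀ * V (σ k₁) k₁ :=
        mul_le_mul_of_nonneg_right hkey (hVnonneg _ _)
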